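/- Let K be a field, let r₁,…,rₙ ≥ 1 be integers, let Q = ⟨x₁^{r₁},…,xₙ^{rₙ}⟩ ⊆ S = K[x₁,…,xₙ], and let I be an ideal of S with Q ⊆ I. Then S/Q, S/I and S/(Q : I) are finite-dimensional K-vector spaces and dim_K S/(Q : I) = dim_K S/Q − dim_K S/I. -/

import Mathlib

open MvPolynomial

section Aux

variable {K : Type*} [Field K] {A : Type*} [CommRing A] [Algebra K A]

private lemma aux_finrank_ideal_quotient_add (J : Ideal A) [FiniteDimensional K A] :
    Module.finrank K (A ⧸ J) + Module.finrank K (J.restrictScalars K) =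
      Module.finrank K A := by
  have hker : LinearMap.ker (Ideal.Quotient.mkₐ K J).toLinearMap = J.restrictScalars K := by
    ext x
    simp [LinearMap.mem_ker, Ideal.Quotient.eq_zero_iff_mem]
  have hrange : LinearMap.range (Ideal.Quotient.mkₐ K J).toLinearMap = ⊤ :=
    LinearMap.range_eq_top.mpr (Ideal.Quotient.mkₐ_surjective K J)
  have h := LinearMap.finrank_range_add_finrank_ker (Ideal.Quotient.mkₐ K J).toLinearMap
  rwa [hker, hrange, finrank_top] at h

end Aux

set_option maxHeartbeats 1000000 in
set_option synthInstance.maxHeartbeats 1000000 in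
/-- If `Q = ⟨x₁^{r₁},…,xₙ^{rₙ}⟩ ⊆ I` (with all `rᵢ ≥ 1`) in
`S = K[x₁,…,xₙ]`, then `S/Q`, `S/I` and `S/(Q : I)` are finite-dimensional `K`-vector
spaces and `dim_K S/(Q : I) = dim_K S/Q − dim_K S/I` (stated additively). -/
theorem finrank_quotient_colon {n : ℕ} {K : Type*} [Field K]
    (r : Fin n → ℕ) (hr : ∀ i, 1 ≤ r i)
    (Q : Ideal (MvPolynomial (Fin n) K))
    (hQ : Q = Ideal.span (Set.range fun i : Fin n =>
      monomial (Finsupp.single i (r i)) (1 : K)))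
    (I : Ideal (MvPolynomial (Fin n) K)) (hQI : Q ≤ I) :
    FiniteDimensional K (MvPolynomial (Fin n) K ⧸ Q) ∧
    FiniteDimensional K (MvPolynomial (Fin n) K ⧸ I) ∧
    FiniteDimensional K (MvPolynomial (Fin n) K ⧸ Q.colon I) ∧
    Module.finrank K (MvPolynomial (Fin n) K ⧸ Q.colon I) +
        Module.finrank K (MvPolynomial (Fin n) K ⧸ I) =
      Module.finrank K (MvPolynomial (Fin n) K ⧸ Q) := by
  classical
  -- the "top corner" exponent
  set d : Fin n →₀ ℕ := Finsupp.equivFunOnFinite.symm (fun i => r i - 1) with hdd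
  have hd : ∀ i, d i = r i - 1 := fun i => rfl
  have hgen : ∀ i, monomial (Finsupp.single i (r i)) (1 : K) ∈ Q :=
    fun i => hQ ▸ Ideal.subset_span ⟨i, rfl⟩
  have hsmall : ∀ b : Fin n →₀ ℕ, b ≤ d ↔ ∀ i, b i < r i := by
    intro b
    rw [Finsupp.le_def]
    constructor <;> intro h i <;>
      · have h1 := h i; have h2 := hd i; have h3 := hr i; omega
  -- coefficients of elements of Q at small exponents vanish
  have hQcoeff : ∀ q ∈ Q, ∀ b : Fin n →₀ ℕ, b ≤ d → coeff b q = 0 := by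
    intro q hq
    rw [hQ] at hq
    induction hq using Submodule.span_induction with
    | mem x hx =>
      obtain ⟨i, rfl⟩ := hx
      intro b hb
      rw [coeff_monomial, if_neg]
      intro hcon
      have : (Finsupp.single i (r i)) i = b i := by rw [hcon]
      rw [Finsupp.single_eq_same] at this
      have := (hsmall b).mp hb i
      omega
    | zero => simp
    | add x y _ _ hx hy => intro b hb; rw [coeff_add, hx b hb, hy b hb, add_zero]
    | smul a x _ hx =>
      intro b hb
      rw [smul_eq_mul, coeff_mul]
      apply Finset.sum_eq_zero
      intro p hp
      have hpb : p.1 + p.2 = b := Finset.HasAntidiagonal.mem_antidiagonal.mp hp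
      have : p.2 ≤ d := le_trans (by rw [← hpb]; exact le_add_self) hb
      rw [hx p.2 this, mul_zero]
  -- every polynomial is congruent mod Q to one supported on small exponents
  have hdec : ∀ f : MvPolynomial (Fin n) K, ∃ t : MvPolynomial (Fin n) K, f - t ∈ Q ∧ ∀ b ∈ t.support, b ≤ d := by
    intro f
    refine ⟨∑ b ∈ f.support.filter (· ≤ d), monomial b (coeff b f), ?_, ?_⟩
    · have hsplit := Finset.sum_filter_add_sum_filter_not f.support (· ≤ d)
        (fun b => monomial b (coeff b f))
      have hf : f - ∑ b ∈ f.support.filter (· ≤ d), monomial b (coeff b f)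
          = ∑ b ∈ f.support.filter (fun b => ¬ b ≤ d), monomial b (coeff b f) := by
        rw [sub_eq_iff_eq_add']
        exact (as_sum f).trans hsplit.symm
      rw [hf]
      apply Ideal.sum_mem
      intro b hb
      have hbd : ¬ b ≤ d := (Finset.mem_filter.mp hb).2
      rw [Finsupp.le_def] at hbd
      push_neg at hbd
      obtain ⟨i, hi⟩ := hbd
      have hri : r i ≤ b i := by have := hr i; rw [hd] at hi; omega
      have hble : Finsupp.single i (r i) ≤ b := Finsupp.single_le_iff.mpr hri
      have : monomial b (coeff b f) =
          monomial (b - Finsupp.single i (r i)) (coeff b f) *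
            monomial (Finsupp.single i (r i)) 1 := by
        rw [monomial_mul, mul_one, tsub_add_cancel_of_le hble]
      rw [this]
      exact Ideal.mul_mem_left _ _ (hgen i)
    · intro b hb
      by_contra h
      have hne := mem_support_iff.mp hb
      apply hne
      rw [coeff_sum]
      apply Finset.sum_eq_zero
      intro c hc
      rw [coeff_monomial, if_neg]
      intro hcb
      exact h (hcb ▸ (Finset.mem_filter.mp hc).2)
  -- finite dimensionality of all the quotients
  have hfin : ∀ J' : Ideal (MvPolynomial (Fin n) K), Q ≤ J' → FiniteDimensional K (MvPolynomial (Fin n) K ⧸ J') := by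
    intro J' hle
    refine ⟨⟨(Finset.Iic d).image fun b => Ideal.Quotient.mk J' (monomial b (1 : K)), ?_⟩⟩
    rw [eq_top_iff]
    rintro a -
    obtain ⟨f, rfl⟩ := Ideal.Quotient.mk_surjective a
    obtain ⟨t, htQ, htd⟩ := hdec f
    have hft : Ideal.Quotient.mk J' f = Ideal.Quotient.mk J' t := by
      rw [Ideal.Quotient.mk_eq_mk_iff_sub_mem]
      exact hle htQ
    have ht : Ideal.Quotient.mk J' t
        = ∑ b ∈ t.support, coeff b t • Ideal.Quotient.mk J' (monomial b (1 : K)) := by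
      conv_lhs => rw [as_sum t]
      rw [map_sum]
      apply Finset.sum_congr rfl
      intro b _
      have h1 : monomial b (coeff b t) = coeff b t • monomial b (1 : K) := by
        rw [smul_monomial, smul_eq_mul, mul_one]
      rw [h1, ← Ideal.Quotient.mkₐ_eq_mk (R₁ := K), map_smul]
    rw [hft, ht]
    apply Submodule.sum_mem
    intro b hb
    apply Submodule.smul_mem
    apply Submodule.subset_span
    rw [Finset.coe_image]
    exact Set.mem_image_of_mem _ (Finset.mem_coe.mpr (Finset.mem_Iic.mpr (htd b hb)))
  haveI iQ : FiniteDimensional K (MvPolynomial (Fin n) K ⧸ Q) := hfin Q le_rfl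
  have hQC : Q ≤ Q.colon I := by
    intro f hf
    rw [Submodule.mem_colon]
    intro g hg
    exact Q.mul_mem_right g hf
  haveI iI : FiniteDimensional K (MvPolynomial (Fin n) K ⧸ I) := hfin I hQI
  haveI iC : FiniteDimensional K (MvPolynomial (Fin n) K ⧸ Q.colon I) := hfin _ hQC
  refine ⟨iQ, iI, iC, ?_⟩
  -- the linear functional φ on S/Q given by the coefficient at d
  have hkerφ : Q.restrictScalars K ≤ LinearMap.ker (lcoeff K d) := by
    intro q hq
    exact hQcoeff q hq d le_rfl
  set φ : (MvPolynomial (Fin n) K ⧸ Q) →ₗ[K] K :=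
    (Submodule.liftQ (Q.restrictScalars K) (lcoeff K d) hkerφ).comp
      (Submodule.Quotient.restrictScalarsEquiv K
        (Q : Submodule (MvPolynomial (Fin n) K) (MvPolynomial (Fin n) K))).symm.toLinearMap with hφdef
  have hφ : ∀ f : MvPolynomial (Fin n) K, φ (Ideal.Quotient.mk Q f) = coeff d f := by
    intro f
    rw [hφdef]
    simp only [LinearMap.comp_apply, LinearEquiv.coe_toLinearMap]
    rw [← Ideal.Quotient.mk_eq_mk, Submodule.Quotient.restrictScalarsEquiv_symm_mk,
      Submodule.liftQ_apply, lcoeff_apply]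
  -- the multiplication bilinear form
  set B : LinearMap.BilinForm K (MvPolynomial (Fin n) K ⧸ Q) := (LinearMap.mul K (MvPolynomial (Fin n) K ⧸ Q)).compr₂ φ with hBdef
  have hB : ∀ x y : MvPolynomial (Fin n) K ⧸ Q, B x y = φ (x * y) := fun _ _ => rfl
  have hrefl : B.IsRefl := by
    intro x y h
    rw [hB, mul_comm, ← hB]
    exact h
  have hBnd : B.Nondegenerate := by
    refine (LinearMap.IsRefl.nondegenerate_iff_separatingLeft hrefl).mpr ?_
    intro a ha
    obtain ⟨f, rfl⟩ := Ideal.Quotient.mk_surjective a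
    obtain ⟨t, htQ, htd⟩ := hdec f
    have hft : Ideal.Quotient.mk Q f = Ideal.Quotient.mk Q t := by
      rw [Ideal.Quotient.mk_eq_mk_iff_sub_mem]; exact htQ
    rw [hft]
    by_contra hne
    have ht0 : t ≠ 0 := by rintro rfl; simp at hne
    obtain ⟨b, hb⟩ := (support_nonempty.mpr ht0)
    have hbd : b ≤ d := htd b hb
    have := ha (Ideal.Quotient.mk Q (monomial (d - b) 1))
    rw [hft, hB, ← map_mul, hφ] at this
    rw [coeff_mul_monomial', if_pos tsub_le_self, mul_one, tsub_tsub_cancel_of_le hbd] at this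
    exact mem_support_iff.mp hb this
  -- the image ideal and its annihilator
  set J : Ideal (MvPolynomial (Fin n) K ⧸ Q) := I.map (Ideal.Quotient.mkₐ K Q) with hJdef
  have hsurj : Function.Surjective (Ideal.Quotient.mkₐ K Q) := Ideal.Quotient.mkₐ_surjective K Q
  have hcomap : Ideal.comap (Ideal.Quotient.mkₐ K Q) J.annihilator = Q.colon I := by
    ext f
    simp only [Ideal.mem_comap, Submodule.mem_annihilator, smul_eq_mul]
    constructor
    · intro h
      rw [Submodule.mem_colon]
      intro g hg
      rw [smul_eq_mul, ← Ideal.Quotient.eq_zero_iff_mem, ← Ideal.Quotient.mkₐ_eq_mk (R₁ := K),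
        map_mul]
      exact h _ (Ideal.mem_map_of_mem _ hg)
    · intro h a ha
      obtain ⟨g, hg, rfl⟩ := Ideal.mem_map_iff_of_surjective _ hsurj |>.mp ha
      rw [← map_mul, Ideal.Quotient.mkₐ_eq_mk, Ideal.Quotient.eq_zero_iff_mem]
      have := Submodule.mem_colon.mp h g hg
      rwa [smul_eq_mul] at this
  have hann : (Q.colon I).map (Ideal.Quotient.mkₐ K Q) = J.annihilator := by
    rw [← hcomap, Ideal.map_comap_of_surjective _ hsurj]
  -- orthogonal of J is the annihilator
  have horth : B.orthogonal (J.restrictScalars K) = J.annihilator.restrictScalars K := by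
    ext a
    rw [LinearMap.BilinForm.mem_orthogonal_iff]
    simp only [Submodule.restrictScalars_mem, Submodule.mem_annihilator, smul_eq_mul]
    constructor
    · intro h j hj
      apply hBnd.1
      intro c
      rw [hB]
      have : a * j * c = j * c * a := by ring
      rw [this, ← hB]
      exact h _ (Submodule.restrictScalars_mem K _ _ |>.mpr (J.mul_mem_right c hj))
    · intro h x hx
      have hx' : x ∈ J := hx
      show B x a = 0
      rw [hB, mul_comm, h x hx', map_zero]
  -- counting
  have h1 := aux_finrank_ideal_quotient_add (K := K) J
  have h2 := aux_finrank_ideal_quotient_add (K := K) J.annihilator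
  have h3 : Module.finrank K (J.annihilator.restrictScalars K) =
      Module.finrank K (MvPolynomial (Fin n) K ⧸ Q) - Module.finrank K (J.restrictScalars K) := by
    rw [← horth]
    exact LinearMap.BilinForm.finrank_orthogonal hBnd _
  have e1 : Module.finrank K (MvPolynomial (Fin n) K ⧸ I) = Module.finrank K ((MvPolynomial (Fin n) K ⧸ Q) ⧸ J) :=
    ((DoubleQuot.quotQuotEquivQuotOfLEₐ K hQI).toLinearEquiv.finrank_eq).symm
  have e2 : Module.finrank K (MvPolynomial (Fin n) K ⧸ Q.colon I) =
      Module.finrank K ((MvPolynomial (Fin n) K ⧸ Q) ⧸ J.annihilator) := by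
    rw [← hann]
    exact ((DoubleQuot.quotQuotEquivQuotOfLEₐ K hQC).toLinearEquiv.finrank_eq).symm
  have hle' : Module.finrank K (J.restrictScalars K) ≤ Module.finrank K (MvPolynomial (Fin n) K ⧸ Q) :=
    Submodule.finrank_le _
  omega
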